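/- Fix δ ∈ (0,1] and an integer d ≥ 1, and write ⟨ω⟩ := (1 + |ω|²)^{1/2} for ω ∈ ℝ^d. There exist a constant C > 0, an integer M ≥ 0, and constants C_j ≥ 0 for each j ∈ ℕ, such that for every h ∈ (0,1] there are a countable set Ω ⊆ ℝ^d and smooth functions φ_ω : ℝ^d → [0,1] indexed by ω ∈ Ω with the following properties, where U_ω := {ξ ∈ ℝ^d : |ξ − ω| ≤ ½ h^δ ⟨ω⟩}: (i) the balls U_ω, ω ∈ Ω, cover ℝ^d; (ii) #{ω ∈ Ω : |ω| ≤ X} ≤ C h^{−M} X^M for every X ≥ 1; (iii) for every ω₁ ∈ Ω, #{ω₂ ∈ Ω : U_{ω₁} ∩ U_{ω₂} ≠ ∅} ≤ C; (iv) each φ_ω is supported in {ξ : |ξ| ≤ ½}, satisfies ‖D^j φ_ω(ξ)‖ ≤ C_j for all ξ ∈ ℝ^d and all j ∈ ℕ, and Σ_{ω ∈ Ω} φ_ω((ξ − ω)/(h^δ ⟨ω⟩)) = 1 for every ξ ∈ ℝ^d. -/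

import Mathlib

set_option maxHeartbeats 1000000

open Metric Set Filter MeasureTheory
open scoped Topology ENNReal

/-- The ball `U_ω` of radius `½ h^δ ⟨ω⟩` about `ω`, where `⟨ω⟩ = (1 + |ω|²)^{1/2}`. -/
noncomputable def Uball (d : ℕ) (hh δ : ℝ) (ω : EuclideanSpace ℝ (Fin d)) :
    Set (EuclideanSpace ℝ (Fin d)) :=
  Metric.closedBall ω (2⁻¹ * hh ^ δ * Real.sqrt (1 + ‖ω‖ ^ 2))

namespace Stmt16

open scoped Nat

noncomputable def jn {d : ℕ} (x : EuclideanSpace ℝ (Fin d)) : ℝ := Real.sqrt (1 + ‖x‖ ^ 2)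

lemma one_le_jn {d : ℕ} (x : EuclideanSpace ℝ (Fin d)) : 1 ≤ jn x := by
  rw [jn]
  exact Real.le_sqrt_of_sq_le (by nlinarith [sq_nonneg ‖x‖])

lemma jn_pos {d : ℕ} (x : EuclideanSpace ℝ (Fin d)) : 0 < jn x :=
  lt_of_lt_of_le one_pos (one_le_jn x)

lemma jn_nonneg {d : ℕ} (x : EuclideanSpace ℝ (Fin d)) : 0 ≤ jn x := (jn_pos x).le

lemma norm_le_jn {d : ℕ} (x : EuclideanSpace ℝ (Fin d)) : ‖x‖ ≤ jn x := by
  rw [jn]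
  exact Real.le_sqrt_of_sq_le (by nlinarith)

lemma jn_sq {d : ℕ} (x : EuclideanSpace ℝ (Fin d)) : jn x ^ 2 = 1 + ‖x‖ ^ 2 :=
  Real.sq_sqrt (by positivity)

lemma jn_lip {d : ℕ} (x y : EuclideanSpace ℝ (Fin d)) : jn x ≤ jn y + dist x y := by
  have h1 : ‖x‖ ≤ ‖y‖ + dist x y := by
    rw [dist_eq_norm]
    have := norm_sub_norm_le x y
    linarith
  have h2 : jn x ≤ Real.sqrt (1 + (‖y‖ + dist x y) ^ 2) := by
    apply Real.sqrt_le_sqrt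
    nlinarith [norm_nonneg x, norm_nonneg y, dist_nonneg (x := x) (y := y)]
  refine h2.trans ?_
  rw [show jn y + dist x y = Real.sqrt ((jn y + dist x y)^2) from
    (Real.sqrt_sq (by have := jn_pos y; have := dist_nonneg (x := x) (y := y); linarith)).symm]
  apply Real.sqrt_le_sqrt
  have h3 := jn_sq y
  have h4 := norm_le_jn y
  have h5 := dist_nonneg (x := x) (y := y)
  nlinarith

lemma iteratedFDeriv_eq_zero_of_eventually {d : ℕ} {f : EuclideanSpace ℝ (Fin d) → ℝ}
    {x : EuclideanSpace ℝ (Fin d)} (h : ∀ᶠ y in 𝓝 x, f y = 0) (j : ℕ) :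
    iteratedFDeriv ℝ j f x = 0 := by
  have h' : f =ᶠ[𝓝 x] (fun _ => (0:ℝ)) := h
  have := Filter.EventuallyEq.iteratedFDerivWithin_eq (𝕜 := ℝ)
    (s := (Set.univ : Set (EuclideanSpace ℝ (Fin d))))
    (h'.filter_mono nhdsWithin_le_nhds) (h'.self_of_nhds) j
  rw [iteratedFDerivWithin_univ, iteratedFDerivWithin_univ] at this
  rw [this, iteratedFDeriv_zero_fun]
  rfl

/-- Volume packing bound. -/
lemma pack {d : ℕ} (hd : 1 ≤ d) {r R : ℝ} (hr : 0 < r) (hR : 0 ≤ R)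
    (c : EuclideanSpace ℝ (Fin d)) (S : Set (EuclideanSpace ℝ (Fin d)))
    (hS : ∀ x ∈ S, dist x c ≤ R)
    (hsep : S.Pairwise fun x y => r ≤ dist x y) :
    S.Finite ∧ (S.ncard : ℝ) ≤ (2 * (R + r) / r) ^ d := by
  classical
  haveI : Nontrivial (EuclideanSpace ℝ (Fin d)) :=
    Module.nontrivial_of_finrank_pos (R := ℝ) (by rw [finrank_euclideanSpace_fin]; omega)
  set B : ℝ := (2 * (R + r) / r) ^ d with hB
  have hB0 : 0 ≤ B := by positivity
  have hfr : Module.finrank ℝ (EuclideanSpace ℝ (Fin d)) = d := finrank_euclideanSpace_fin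
  set V : ℝ≥0∞ := volume (ball (0 : EuclideanSpace ℝ (Fin d)) 1) with hV
  have hV0 : V ≠ 0 := (measure_ball_pos _ _ one_pos).ne'
  have hVt : V ≠ ⊤ := measure_ball_lt_top.ne
  have key : ∀ T : Finset (EuclideanSpace ℝ (Fin d)), ↑T ⊆ S → (T.card : ℝ) ≤ B := by
    intro T hT
    have hdisj : (T : Set (EuclideanSpace ℝ (Fin d))).PairwiseDisjoint
        (fun x => ball x (r / 2)) := by
      intro x hx y hy hxy
      exact ball_disjoint_ball (by
        have := hsep (hT hx) (hT hy) hxy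
        linarith)
    have hsum := measure_biUnion_finset (μ := volume) hdisj (fun b _ => measurableSet_ball)
    have hsub : (⋃ x ∈ T, ball x (r / 2)) ⊆ ball c (R + r) := by
      intro y hy
      simp only [Set.mem_iUnion, mem_ball] at hy ⊢
      obtain ⟨x, hx, hxy⟩ := hy
      have := hS x (hT hx)
      calc dist y c ≤ dist y x + dist x c := dist_triangle _ _ _
        _ < R + r := by linarith
    have hle : ∑ x ∈ T, volume (ball x (r / 2)) ≤ volume (ball c (R + r)) :=
      hsum ▸ measure_mono hsub
    have hbigr : (0:ℝ) ≤ R + r := by linarith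
    have heq : ∀ x : EuclideanSpace ℝ (Fin d), volume (ball x (r/2)) =
        ENNReal.ofReal ((r/2) ^ d) * V := by
      intro x
      rw [hV, Measure.addHaar_ball volume x (by linarith : (0:ℝ) ≤ r/2), hfr]
    rw [Finset.sum_congr rfl (fun x _ => heq x), Finset.sum_const, nsmul_eq_mul,
      hV, Measure.addHaar_ball volume c hbigr, hfr] at hle
    rw [← mul_assoc] at hle
    have hle2 : (T.card : ℝ≥0∞) * ENNReal.ofReal ((r/2) ^ d) ≤ ENNReal.ofReal ((R+r) ^ d) :=
      (ENNReal.mul_le_mul_iff_left hV0 hVt).1 hle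
    rw [show ((T.card : ℝ≥0∞)) = ENNReal.ofReal (T.card : ℝ) by simp,
      ← ENNReal.ofReal_mul (by positivity)] at hle2
    have hle3 : (T.card : ℝ) * (r/2) ^ d ≤ (R+r) ^ d :=
      (ENNReal.ofReal_le_ofReal_iff (by positivity)).1 hle2
    have hrpow : (0:ℝ) < (r/2) ^ d := by positivity
    rw [hB, show 2 * (R + r) / r = (R + r) / (r / 2) by field_simp, div_pow]
    rw [le_div_iff₀ hrpow]
    linarith
  have hfin : S.Finite := by
    by_contra hinf
    have hinf' : S.Infinite := hinf
    obtain ⟨t, htS, htfin, htcard⟩ := hinf'.exists_subset_ncard_eq (Nat.floor B + 1)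
    have hkey := key htfin.toFinset (by simpa using htS)
    rw [show htfin.toFinset.card = t.ncard from (Set.ncard_eq_toFinset_card t htfin).symm,
      htcard] at hkey
    have := Nat.lt_floor_add_one B
    push_cast at hkey
    linarith
  refine ⟨hfin, ?_⟩
  have hkey := key hfin.toFinset (by simp)
  rwa [show hfin.toFinset.card = S.ncard from (Set.ncard_eq_toFinset_card S hfin).symm] at hkey


/-! ### The bump function ψ and the inversion helper r -/

lemma cont_iter {E F : Type*} [NormedAddCommGroup E] [NormedSpace ℝ E]
    [NormedAddCommGroup F] [NormedSpace ℝ F] {f : E → F}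
    (hf : ContDiff ℝ (⊤ : ℕ∞) f) (j : ℕ) : Continuous (iteratedFDeriv ℝ j f) :=
  hf.continuous_iteratedFDeriv (by exact_mod_cast le_top)

noncomputable def psi (d : ℕ) (x : EuclideanSpace ℝ (Fin d)) : ℝ :=
  Real.smoothTransition ((1/9 - ‖x‖ ^ 2) * 21)

lemma psi_contDiff (d : ℕ) : ContDiff ℝ (⊤ : ℕ∞) (psi d) := by
  apply Real.smoothTransition.contDiff.comp
  exact (contDiff_const.sub (contDiff_norm_sq ℝ)).mul contDiff_const

lemma psi_nonneg (d : ℕ) (x : EuclideanSpace ℝ (Fin d)) : 0 ≤ psi d x :=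
  Real.smoothTransition.nonneg _

lemma psi_le_one (d : ℕ) (x : EuclideanSpace ℝ (Fin d)) : psi d x ≤ 1 :=
  Real.smoothTransition.le_one _

lemma psi_one (d : ℕ) {x : EuclideanSpace ℝ (Fin d)} (hx : ‖x‖ ≤ 4⁻¹) : psi d x = 1 := by
  apply Real.smoothTransition.one_of_one_le
  have h2 : ‖x‖ ^ 2 ≤ 16⁻¹ := by nlinarith [norm_nonneg x]
  nlinarith

lemma psi_zero (d : ℕ) {x : EuclideanSpace ℝ (Fin d)} (hx : 3⁻¹ ≤ ‖x‖) : psi d x = 0 := by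
  apply Real.smoothTransition.zero_of_nonpos
  have h2 : (9:ℝ)⁻¹ ≤ ‖x‖ ^ 2 := by nlinarith [norm_nonneg x]
  nlinarith

lemma psi_bound (d : ℕ) : ∀ j : ℕ, ∃ B : ℝ, 0 ≤ B ∧
    ∀ x : EuclideanSpace ℝ (Fin d), ‖iteratedFDeriv ℝ j (psi d) x‖ ≤ B := by
  intro j
  have hcont : ContinuousOn (fun x => iteratedFDeriv ℝ j (psi d) x)
      (closedBall (0 : EuclideanSpace ℝ (Fin d)) 1) :=
    (cont_iter (psi_contDiff d) j).continuousOn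
  obtain ⟨B, hBle⟩ := (isCompact_closedBall (0 : EuclideanSpace ℝ (Fin d)) 1).exists_bound_of_continuousOn hcont
  refine ⟨max B 0, le_max_right _ _, fun x => ?_⟩
  rcases le_or_gt ‖x‖ 1 with hx | hx
  · exact le_trans (hBle x (by simpa [mem_closedBall, dist_zero_right] using hx))
      (le_max_left _ _)
  · have hz : iteratedFDeriv ℝ j (psi d) x = 0 := by
      apply iteratedFDeriv_eq_zero_of_eventually
      have hopen : IsOpen {y : EuclideanSpace ℝ (Fin d) | 3⁻¹ < ‖y‖} :=
        isOpen_lt continuous_const continuous_norm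
      filter_upwards [hopen.mem_nhds (by simp only [Set.mem_setOf_eq]; linarith)] with y hy
      exact psi_zero d (le_of_lt hy)
    rw [hz]
    simp [le_max_right B 0]

noncomputable def rf (y : ℝ) : ℝ := (1 - Real.smoothTransition ((3/4 - y) * 4)) * y⁻¹

lemma rf_eq_zero {y : ℝ} (hy : y ≤ 1/2) : rf y = 0 := by
  rw [rf, Real.smoothTransition.one_of_one_le (by linarith)]
  ring

lemma rf_eq_inv {y : ℝ} (hy : 3/4 ≤ y) : rf y = y⁻¹ := by
  rw [rf, Real.smoothTransition.zero_of_nonpos (by linarith)]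
  ring

lemma rf_contDiff : ContDiff ℝ (⊤ : ℕ∞) rf := by
  rw [contDiff_iff_contDiffAt]
  intro y
  rcases lt_or_ge y (1/2) with hy | hy
  · have hev : rf =ᶠ[𝓝 y] (fun _ => (0:ℝ)) := by
      have hopen : IsOpen {z : ℝ | z < 1/2} := isOpen_lt continuous_id continuous_const
      filter_upwards [hopen.mem_nhds hy] with z hz
      exact rf_eq_zero (le_of_lt hz)
    exact contDiffAt_const.congr_of_eventuallyEq hev
  · have hy0 : y ≠ 0 := by intro h; rw [h] at hy; norm_num at hy
    apply ContDiffAt.mul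
    · exact (contDiffAt_const.sub
        (Real.smoothTransition.contDiff.contDiffAt.comp y
          ((contDiffAt_const.sub contDiffAt_id).mul contDiffAt_const)))
    · exact contDiffAt_inv ℝ hy0

lemma rf_bound (K : ℝ) : ∀ j : ℕ, ∃ B : ℝ, 0 ≤ B ∧
    ∀ y ∈ Set.Icc (1:ℝ) K, ‖iteratedFDeriv ℝ j rf y‖ ≤ B := by
  intro j
  have hcont : ContinuousOn (fun y => iteratedFDeriv ℝ j rf y) (Set.Icc (1:ℝ) K) :=
    (cont_iter rf_contDiff j).continuousOn
  obtain ⟨B, hBle⟩ := isCompact_Icc.exists_bound_of_continuousOn hcont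
  exact ⟨max B 0, le_max_right _ _, fun y hy => (hBle y hy).trans (le_max_left _ _)⟩


/-! ### Affine compositions -/

lemma fderiv_aff {d : ℕ} (b : EuclideanSpace ℝ (Fin d)) (a : ℝ) :
    fderiv ℝ (fun η : EuclideanSpace ℝ (Fin d) => b + a • η) =
      fun _ => a • ContinuousLinearMap.id ℝ (EuclideanSpace ℝ (Fin d)) :=
  funext fun z => (((hasFDerivAt_id z).const_smul a).const_add b).fderiv

lemma aff_contDiff {d : ℕ} (b : EuclideanSpace ℝ (Fin d)) (a : ℝ) :
    ContDiff ℝ (⊤ : ℕ∞) (fun η : EuclideanSpace ℝ (Fin d) => b + a • η) :=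
  contDiff_const.add (contDiff_id.const_smul a)

lemma aff_iter_bound {d : ℕ} (b : EuclideanSpace ℝ (Fin d)) (a : ℝ) {i : ℕ} (hi : 1 ≤ i)
    (x : EuclideanSpace ℝ (Fin d)) :
    ‖iteratedFDeriv ℝ i (fun η : EuclideanSpace ℝ (Fin d) => b + a • η) x‖ ≤ |a| := by
  obtain ⟨k, rfl⟩ : ∃ k, i = k + 1 := ⟨i - 1, (Nat.succ_pred_eq_of_pos hi).symm⟩
  rw [← norm_iteratedFDeriv_fderiv, fderiv_aff]
  cases k with
  | zero =>
    rw [norm_iteratedFDeriv_zero, norm_smul]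
    calc ‖a‖ * ‖ContinuousLinearMap.id ℝ (EuclideanSpace ℝ (Fin d))‖ ≤ ‖a‖ * 1 :=
          mul_le_mul_of_nonneg_left ContinuousLinearMap.norm_id_le (norm_nonneg a)
      _ = |a| := by rw [mul_one, Real.norm_eq_abs]
  | succ k =>
    rw [iteratedFDeriv_const_of_ne (Nat.succ_ne_zero k)]
    simpa using abs_nonneg a

lemma term_bound {d : ℕ} {b : EuclideanSpace ℝ (Fin d)} {a : ℝ} (ha : |a| ≤ 3) (j : ℕ)
    (x : EuclideanSpace ℝ (Fin d)) {C : ℝ}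
    (hC : ∀ i, i ≤ j → ‖iteratedFDeriv ℝ i (psi d) (b + a • x)‖ ≤ C) :
    ‖iteratedFDeriv ℝ j (fun η => psi d (b + a • η)) x‖ ≤ (j ! : ℝ) * C * 3 ^ j := by
  have h := norm_iteratedFDeriv_comp_le (𝕜 := ℝ) (g := psi d)
    (f := fun η : EuclideanSpace ℝ (Fin d) => b + a • η)
    (psi_contDiff d) (aff_contDiff b a) (by exact_mod_cast le_top) x hC
    (fun i hi1 hij => le_trans (aff_iter_bound b a hi1 x)
      (ha.trans (le_self_pow₀ (by norm_num) (by omega))))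
  exact h

/-! ### The localized denominator g and the functions φ -/

noncomputable def gfun (d : ℕ) (t : ℝ) (N : Finset (EuclideanSpace ℝ (Fin d)))
    (ω η : EuclideanSpace ℝ (Fin d)) : ℝ :=
  ∑ ω' ∈ N, psi d ((t * jn ω')⁻¹ • (ω - ω') + ((jn ω) / (jn ω')) • η)

lemma gfun_contDiff (d : ℕ) (t : ℝ) (N : Finset (EuclideanSpace ℝ (Fin d)))
    (ω : EuclideanSpace ℝ (Fin d)) : ContDiff ℝ (⊤ : ℕ∞) (gfun d t N ω) := by
  apply ContDiff.sum
  intro ω' _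
  exact (psi_contDiff d).comp (aff_contDiff _ _)

lemma gfun_nonneg (d : ℕ) (t : ℝ) (N : Finset (EuclideanSpace ℝ (Fin d)))
    (ω η : EuclideanSpace ℝ (Fin d)) : 0 ≤ gfun d t N ω η :=
  Finset.sum_nonneg fun ω' _ => psi_nonneg d _

lemma gfun_le_card (d : ℕ) (t : ℝ) (N : Finset (EuclideanSpace ℝ (Fin d)))
    (ω η : EuclideanSpace ℝ (Fin d)) : gfun d t N ω η ≤ N.card := by
  calc gfun d t N ω η ≤ ∑ ω' ∈ N, 1 := Finset.sum_le_sum fun ω' _ => psi_le_one d _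
    _ = N.card := by simp

lemma gfun_bound {d : ℕ} {t : ℝ} {N : Finset (EuclideanSpace ℝ (Fin d))}
    {ω : EuclideanSpace ℝ (Fin d)} (hjn : ∀ ω' ∈ N, jn ω ≤ 3 * jn ω') {K : ℝ}
    (hcard : (N.card : ℝ) ≤ K) (j : ℕ) (x : EuclideanSpace ℝ (Fin d)) {C : ℝ} (hC0 : 0 ≤ C)
    (hC : ∀ (i : ℕ), i ≤ j → ∀ y, ‖iteratedFDeriv ℝ i (psi d) y‖ ≤ C) :
    ‖iteratedFDeriv ℝ j (gfun d t N ω) x‖ ≤ K * ((j ! : ℝ) * C * 3 ^ j) := by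
  have hrw : iteratedFDeriv ℝ j (gfun d t N ω) =
      ∑ ω' ∈ N, iteratedFDeriv ℝ j
        (fun η => psi d ((t * jn ω')⁻¹ • (ω - ω') + ((jn ω) / (jn ω')) • η)) := by
    rw [show gfun d t N ω = (∑ ω' ∈ N,
        (fun η => psi d ((t * jn ω')⁻¹ • (ω - ω') + ((jn ω) / (jn ω')) • η)) ·) from rfl]
    exact iteratedFDeriv_sum fun ω' _ =>
      ((psi_contDiff d).comp (aff_contDiff _ _)).of_le (by exact_mod_cast le_top)
  rw [hrw]
  have hterm : ∀ ω' ∈ N, ‖iteratedFDeriv ℝ j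
      (fun η => psi d ((t * jn ω')⁻¹ • (ω - ω') + ((jn ω) / (jn ω')) • η)) x‖ ≤
      (j ! : ℝ) * C * 3 ^ j := by
    intro ω' hω'
    refine term_bound ?_ j x (fun i hij => hC i hij _)
    rw [abs_of_nonneg (div_nonneg (jn_nonneg ω) (jn_nonneg ω'))]
    rw [div_le_iff₀ (jn_pos ω')]
    linarith [hjn ω' hω']
  calc ‖(∑ ω' ∈ N, iteratedFDeriv ℝ j
        (fun η => psi d ((t * jn ω')⁻¹ • (ω - ω') + ((jn ω) / (jn ω')) • η)) : _) x‖ =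
      ‖∑ ω' ∈ N, iteratedFDeriv ℝ j
        (fun η => psi d ((t * jn ω')⁻¹ • (ω - ω') + ((jn ω) / (jn ω')) • η)) x‖ := by
        rw [Finset.sum_apply]
    _ ≤ ∑ ω' ∈ N, ‖iteratedFDeriv ℝ j
        (fun η => psi d ((t * jn ω')⁻¹ • (ω - ω') + ((jn ω) / (jn ω')) • η)) x‖ :=
        norm_sum_le _ _
    _ ≤ ∑ _ω' ∈ N, ((j ! : ℝ) * C * 3 ^ j) := Finset.sum_le_sum hterm
    _ = (N.card : ℝ) * ((j ! : ℝ) * C * 3 ^ j) := by rw [Finset.sum_const, nsmul_eq_mul]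
    _ ≤ K * ((j ! : ℝ) * C * 3 ^ j) := by
        apply mul_le_mul_of_nonneg_right hcard
        positivity

noncomputable def phifun (d : ℕ) (t : ℝ) (N : Finset (EuclideanSpace ℝ (Fin d)))
    (ω η : EuclideanSpace ℝ (Fin d)) : ℝ :=
  psi d η * rf (gfun d t N ω η)

lemma phifun_contDiff (d : ℕ) (t : ℝ) (N : Finset (EuclideanSpace ℝ (Fin d)))
    (ω : EuclideanSpace ℝ (Fin d)) : ContDiff ℝ (⊤ : ℕ∞) (phifun d t N ω) :=
  (psi_contDiff d).mul (rf_contDiff.comp (gfun_contDiff d t N ω))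


lemma phifun_master (d : ℕ) : ∃ B : ℕ → ℝ, (∀ j, 0 ≤ B j) ∧
    ∀ (j : ℕ) (t : ℝ) (N : Finset (EuclideanSpace ℝ (Fin d))) (ω : EuclideanSpace ℝ (Fin d)),
      (∀ ω' ∈ N, jn ω ≤ 3 * jn ω') → ((N.card : ℝ) ≤ 98 ^ d) →
      (∀ η, ‖η‖ ≤ 2⁻¹ → 1 ≤ gfun d t N ω η) →
      ∀ x, ‖iteratedFDeriv ℝ j (phifun d t N ω) x‖ ≤ B j := by
  obtain ⟨Bψ, hBψ⟩ := Classical.axiomOfChoice (psi_bound d)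
  obtain ⟨Br, hBr⟩ := Classical.axiomOfChoice (rf_bound ((98:ℝ) ^ d))
  set SBψ : ℕ → ℝ := fun j => ∑ i ∈ Finset.range (j+1), Bψ i with hSBψ
  set SBr : ℕ → ℝ := fun j => ∑ i ∈ Finset.range (j+1), Br i with hSBr
  set Gb : ℕ → ℝ := fun j => 98 ^ d * ((j ! : ℝ) * SBψ j * 3 ^ j) with hGb
  set Dv : ℕ → ℝ := fun j => 1 + ∑ i ∈ Finset.range (j+1), Gb i with hDv
  set Vb : ℕ → ℝ := fun j => (j ! : ℝ) * SBr j * Dv j ^ j with hVb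
  have hSBψ0 : ∀ j, 0 ≤ SBψ j := fun j => Finset.sum_nonneg fun i _ => (hBψ i).1
  have hSBr0 : ∀ j, 0 ≤ SBr j := fun j => Finset.sum_nonneg fun i _ => (hBr i).1
  have hGb0 : ∀ j, 0 ≤ Gb j := fun j => by
    have := hSBψ0 j; simp only [hGb]; positivity
  have hDv1 : ∀ j, 1 ≤ Dv j := fun j => by
    simp only [hDv]
    have : 0 ≤ ∑ i ∈ Finset.range (j+1), Gb i := Finset.sum_nonneg fun i _ => hGb0 i
    linarith
  have hVb0 : ∀ j, 0 ≤ Vb j := fun j => by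
    have h1 := hSBr0 j
    have h2 := hDv1 j
    simp only [hVb]
    positivity
  refine ⟨fun j => ∑ i ∈ Finset.range (j+1), (j.choose i : ℝ) * Bψ i * Vb (j - i),
    fun j => Finset.sum_nonneg fun i _ => by
      have := (hBψ i).1; have := hVb0 (j - i); positivity, ?_⟩
  intro j t N ω hjn hcard hg1 x
  have hBj0 : (0:ℝ) ≤ ∑ i ∈ Finset.range (j+1), (j.choose i : ℝ) * Bψ i * Vb (j - i) :=
    Finset.sum_nonneg fun i _ => by
      have := (hBψ i).1; have := hVb0 (j - i); positivity
  rcases lt_or_ge 3⁻¹ ‖x‖ with hx | hx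
  · have hz : iteratedFDeriv ℝ j (phifun d t N ω) x = 0 := by
      apply iteratedFDeriv_eq_zero_of_eventually
      have hopen : IsOpen {y : EuclideanSpace ℝ (Fin d) | 3⁻¹ < ‖y‖} :=
        isOpen_lt continuous_const continuous_norm
      filter_upwards [hopen.mem_nhds hx] with y hy
      rw [phifun, psi_zero d (le_of_lt hy), zero_mul]
    rw [hz]
    simpa using hBj0
  · -- good region
    have hgx : gfun d t N ω x ∈ Set.Icc (1:ℝ) ((98:ℝ) ^ d) := by
      constructor
      · exact hg1 x (hx.trans (by norm_num))
      · exact (gfun_le_card d t N ω x).trans hcard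
    have hgb : ∀ i : ℕ, ∀ y, ‖iteratedFDeriv ℝ i (gfun d t N ω) y‖ ≤ Gb i := by
      intro i y
      refine gfun_bound hjn hcard i y (hSBψ0 i) ?_
      intro k hk z
      exact ((hBψ k).2 z).trans (Finset.single_le_sum (f := Bψ)
        (fun m _ => (hBψ m).1) (Finset.mem_range.2 (by omega)))
    have hvb : ∀ m, ‖iteratedFDeriv ℝ m (rf ∘ gfun d t N ω) x‖ ≤ Vb m := by
      intro m
      refine norm_iteratedFDeriv_comp_le rf_contDiff (gfun_contDiff d t N ω)
        (by exact_mod_cast le_top) x (C := SBr m) (D := Dv m) ?_ ?_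
      · intro i hi
        exact ((hBr i).2 _ hgx).trans (Finset.single_le_sum (f := Br)
          (fun k _ => (hBr k).1) (Finset.mem_range.2 (by omega)))
      · intro i hi1 him
        refine (hgb i x).trans ?_
        have h1 : Gb i ≤ Dv m := by
          simp only [hDv]
          have : Gb i ≤ ∑ k ∈ Finset.range (m+1), Gb k :=
            Finset.single_le_sum (f := Gb) (fun k _ => hGb0 k) (Finset.mem_range.2 (by omega))
          linarith
        exact h1.trans (le_self_pow₀ (hDv1 m) (by omega))
    have hmul := norm_iteratedFDeriv_mul_le (𝕜 := ℝ) (f := psi d)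
      (g := fun y => rf (gfun d t N ω y)) (psi_contDiff d)
      (rf_contDiff.comp (gfun_contDiff d t N ω)) x
      (n := j) (by exact_mod_cast le_top)
    refine hmul.trans ?_
    apply Finset.sum_le_sum
    intro i hi
    have h1 : ‖iteratedFDeriv ℝ i (psi d) x‖ ≤ Bψ i := (hBψ i).2 x
    have h2 : ‖iteratedFDeriv ℝ (j - i) (fun y => rf (gfun d t N ω y)) x‖ ≤ Vb (j - i) :=
      hvb (j - i)
    have hc0 : (0:ℝ) ≤ (j.choose i : ℝ) := by positivity
    calc (j.choose i : ℝ) * ‖iteratedFDeriv ℝ i (psi d) x‖ *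
          ‖iteratedFDeriv ℝ (j - i) (fun y => rf (gfun d t N ω y)) x‖ ≤
        (j.choose i : ℝ) * Bψ i * ‖iteratedFDeriv ℝ (j - i) (fun y => rf (gfun d t N ω y)) x‖ :=
          mul_le_mul_of_nonneg_right (mul_le_mul_of_nonneg_left h1 hc0) (norm_nonneg _)
      _ ≤ (j.choose i : ℝ) * Bψ i * Vb (j - i) :=
          mul_le_mul_of_nonneg_left h2 (by have := (hBψ i).1; positivity)


/-! ### Geometry of the balls -/

lemma mem_uball_iff {d : ℕ} {h δ : ℝ} {ω ξ : EuclideanSpace ℝ (Fin d)} :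
    ξ ∈ Uball d h δ ω ↔ dist ξ ω ≤ 2⁻¹ * h ^ δ * jn ω := Metric.mem_closedBall

lemma uball_inter {d : ℕ} {h δ : ℝ} (ht0 : 0 < h ^ δ) (ht1 : h ^ δ ≤ 1)
    {ω₁ ω₂ : EuclideanSpace ℝ (Fin d)}
    (hne : (Uball d h δ ω₁ ∩ Uball d h δ ω₂).Nonempty) :
    jn ω₂ ≤ 3 * jn ω₁ ∧ dist ω₂ ω₁ ≤ 2 * h ^ δ * jn ω₁ := by
  obtain ⟨z, hz1, hz2⟩ := hne
  rw [mem_uball_iff] at hz1 hz2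
  set t := h ^ δ
  have hj1 := jn_pos ω₁
  have hj2 := jn_pos ω₂
  have hd12 : dist ω₂ ω₁ ≤ 2⁻¹ * t * jn ω₁ + 2⁻¹ * t * jn ω₂ := by
    calc dist ω₂ ω₁ ≤ dist ω₂ z + dist z ω₁ := dist_triangle _ _ _
      _ = dist z ω₂ + dist z ω₁ := by rw [dist_comm ω₂ z]
      _ ≤ 2⁻¹ * t * jn ω₁ + 2⁻¹ * t * jn ω₂ := by linarith
  have hlip := jn_lip ω₂ ω₁
  have h3 : jn ω₂ ≤ 3 * jn ω₁ := by nlinarith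
  refine ⟨h3, ?_⟩
  nlinarith

lemma gfun_eval {d : ℕ} {t : ℝ} (ht : 0 < t) (N : Finset (EuclideanSpace ℝ (Fin d)))
    (ω ξ : EuclideanSpace ℝ (Fin d)) :
    gfun d t N ω ((t * jn ω)⁻¹ • (ξ - ω)) = ∑ ω' ∈ N, psi d ((t * jn ω')⁻¹ • (ξ - ω')) := by
  apply Finset.sum_congr rfl
  intro ω' _
  congr 1
  rw [smul_smul]
  have hjω := jn_pos ω
  have hjω' := jn_pos ω'
  have hc : jn ω / jn ω' * (t * jn ω)⁻¹ = (t * jn ω')⁻¹ := by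
    rw [← div_eq_mul_inv, div_div, ← one_div]
    rw [div_eq_div_iff (by positivity : jn ω' * (t * jn ω) ≠ 0) (by positivity : t * jn ω' ≠ 0)]
    ring
  rw [hc, ← smul_add]
  congr 1
  abel

/-! ### The maximal separated set -/

lemma core (d : ℕ) (hd : 1 ≤ d) {δ h : ℝ} (hδ : δ ∈ Set.Ioc (0:ℝ) 1)
    (hh : h ∈ Set.Ioc (0:ℝ) 1) :
    ∃ Ω : Set (EuclideanSpace ℝ (Fin d)),
      Ω.Countable ∧
      (∀ ξ, ∃ ω ∈ Ω, dist ξ ω ≤ 4⁻¹ * h ^ δ * jn ω) ∧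
      (∀ X : ℝ, 1 ≤ X → {ω ∈ Ω | ‖ω‖ ≤ X}.Finite ∧
        (({ω ∈ Ω | ‖ω‖ ≤ X}).ncard : ℝ) ≤ 98 ^ d * h ^ (-(d:ℤ)) * X ^ d) ∧
      (∀ ω₁ ∈ Ω, {ω₂ ∈ Ω | (Uball d h δ ω₁ ∩ Uball d h δ ω₂).Nonempty}.Finite ∧
        (({ω₂ ∈ Ω | (Uball d h δ ω₁ ∩ Uball d h δ ω₂).Nonempty}).ncard : ℝ) ≤ 98 ^ d) := by
  obtain ⟨h0, h1⟩ := hh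
  obtain ⟨hδ0, hδ1⟩ := hδ
  set t := h ^ δ with htdef
  have ht0 : 0 < t := Real.rpow_pos_of_pos h0 δ
  have ht1 : t ≤ 1 := Real.rpow_le_one h0.le h1 hδ0.le
  have hht : h ≤ t := by
    calc h = h ^ (1:ℝ) := (Real.rpow_one h).symm
      _ ≤ h ^ δ := Real.rpow_le_rpow_of_exponent_ge h0 h1 hδ1
  -- Zorn
  set R : EuclideanSpace ℝ (Fin d) → EuclideanSpace ℝ (Fin d) → Prop :=
    fun x y => t/8 * max (jn x) (jn y) ≤ dist x y with hR
  have hRsymm : Symmetric R := by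
    intro x y hxy
    show t/8 * max (jn y) (jn x) ≤ dist y x
    rw [max_comm, dist_comm]
    exact hxy
  set 𝒮 : Set (Set (EuclideanSpace ℝ (Fin d))) := {S | S.Pairwise R} with h𝒮
  obtain ⟨Ω, hΩ⟩ := zorn_subset 𝒮 (by
    intro c hc hchain
    refine ⟨⋃₀ c, ?_, fun s hs => subset_sUnion_of_mem hs⟩
    intro x hx y hy hxy
    obtain ⟨s₁, hs₁, hxs₁⟩ := hx
    obtain ⟨s₂, hs₂, hys₂⟩ := hy
    rcases hchain.total hs₁ hs₂ with hsub | hsub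
    · exact hc hs₂ (hsub hxs₁) hys₂ hxy
    · exact hc hs₁ hxs₁ (hsub hys₂) hxy)
  have hsep : Ω.Pairwise R := hΩ.prop
  -- Covering
  have hcover : ∀ ξ, ∃ ω ∈ Ω, dist ξ ω ≤ 4⁻¹ * t * jn ω := by
    intro ξ
    by_contra hcon
    push_neg at hcon
    have hξ : ξ ∉ Ω := by
      intro hmem
      have := hcon ξ hmem
      rw [dist_self] at this
      have := jn_pos ξ
      nlinarith
    have hins : insert ξ Ω ∈ 𝒮 := by
      haveI : Std.Symm R := ⟨fun a b h => hRsymm h⟩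
      rw [h𝒮, Set.mem_setOf_eq, Set.pairwise_insert_of_symm]
      refine ⟨hsep, ?_⟩
      intro ω hω hne
      show t/8 * max (jn ξ) (jn ω) ≤ dist ξ ω
      by_contra hlt
      push_neg at hlt
      have hj1 := jn_pos ω
      have hjξ := jn_pos ξ
      have hcω := hcon ω hω
      have hdn : (0:ℝ) ≤ dist ξ ω := dist_nonneg
      rcases le_total (jn ξ) (jn ω) with hle | hle
      · rw [max_eq_right hle] at hlt
        nlinarith
      · rw [max_eq_left hle] at hlt
        have hlip := jn_lip ξ ω
        nlinarith
    have := hΩ.2 hins (Set.subset_insert ξ Ω) (Set.mem_insert ξ Ω)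
    exact hξ this
  -- Counting
  have hcount : ∀ X : ℝ, 1 ≤ X → {ω ∈ Ω | ‖ω‖ ≤ X}.Finite ∧
      (({ω ∈ Ω | ‖ω‖ ≤ X}).ncard : ℝ) ≤ 98 ^ d * h ^ (-(d:ℤ)) * X ^ d := by
    intro X hX
    have hpack := pack hd (r := t/8) (by positivity) (zero_le_one.trans hX)
      (0 : EuclideanSpace ℝ (Fin d)) {ω ∈ Ω | ‖ω‖ ≤ X}
      (fun x hx => by simpa [dist_zero_right] using hx.2)
      (by
        intro x hx y hy hxy
        have := hsep hx.1 hy.1 hxy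
        simp only [hR] at this
        have h1 : (1:ℝ) ≤ max (jn x) (jn y) := le_trans (one_le_jn x) (le_max_left _ _)
        nlinarith)
    refine ⟨hpack.1, hpack.2.trans ?_⟩
    have harith : 2 * (X + t/8) / (t/8) ≤ 98 * X / h := by
      rw [div_le_div_iff₀ (by positivity) h0]
      have hXh : h * X ≤ t * X := mul_le_mul_of_nonneg_right hht (zero_le_one.trans hX)
      have hth : t * h ≤ t * 1 := mul_le_mul_of_nonneg_left h1 ht0.le
      have htX : t * 1 ≤ t * X := mul_le_mul_of_nonneg_left hX ht0.le
      nlinarith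
    calc (2 * (X + t/8) / (t/8)) ^ d ≤ (98 * X / h) ^ d :=
          pow_le_pow_left₀ (by positivity) harith d
      _ = 98 ^ d * h ^ (-(d:ℤ)) * X ^ d := by
          rw [div_pow, mul_pow, zpow_neg, zpow_natCast]
          field_simp
  -- Overlap
  have hover : ∀ ω₁ ∈ Ω, {ω₂ ∈ Ω | (Uball d h δ ω₁ ∩ Uball d h δ ω₂).Nonempty}.Finite ∧
      (({ω₂ ∈ Ω | (Uball d h δ ω₁ ∩ Uball d h δ ω₂).Nonempty}).ncard : ℝ) ≤ 98 ^ d := by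
    intro ω₁ _
    have hj1 := jn_pos ω₁
    have hpack := pack hd (r := t * jn ω₁ / 24) (by positivity) (R := 2 * t * jn ω₁)
      (by positivity) ω₁ {ω₂ ∈ Ω | (Uball d h δ ω₁ ∩ Uball d h δ ω₂).Nonempty}
      (fun ω₂ hω₂ => (uball_inter ht0 ht1 hω₂.2).2)
      (by
        intro x hx y hy hxy
        have hsepxy := hsep hx.1 hy.1 hxy
        simp only [hR] at hsepxy
        have hx3 : jn ω₁ ≤ 3 * jn x := by
          have h1 := (uball_inter ht0 ht1 (Set.inter_comm _ _ ▸ hx.2)).1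
          exact h1
        have h2 : jn x ≤ max (jn x) (jn y) := le_max_left _ _
        nlinarith)
    refine ⟨hpack.1, hpack.2.trans ?_⟩
    have heq : 2 * (2 * t * jn ω₁ + t * jn ω₁ / 24) / (t * jn ω₁ / 24) = 98 := by
      field_simp
      ring
    rw [heq]
  -- Countability
  have hcountable : Ω.Countable := by
    have hsub : Ω = ⋃ n : ℕ, {ω ∈ Ω | ‖ω‖ ≤ (n:ℝ) + 1} := by
      apply Set.Subset.antisymm
      · intro ω hω
        obtain ⟨n, hn⟩ := exists_nat_ge ‖ω‖
        exact Set.mem_iUnion.2 ⟨n, hω, by linarith⟩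
      · intro ω hω
        obtain ⟨n, hn, _⟩ := Set.mem_iUnion.1 hω
        exact hn
    rw [hsub]
    exact Set.countable_iUnion fun n =>
      ((hcount ((n:ℝ) + 1) (by norm_num)).1).countable
  exact ⟨Ω, hcountable, hcover, hcount, hover⟩

end Stmt16


open Stmt16

/-- An `h`-dependent partition of unity on `ℝ^d` adapted to balls of radius `h^δ ⟨ω⟩`,
with uniformly bounded overlaps, polynomially many centers in each ball, and uniform
derivative bounds. -/
theorem statement16 (δ : ℝ) (hδ : δ ∈ Set.Ioc (0 : ℝ) 1) (d : ℕ) (hd : 1 ≤ d) :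
    ∃ (C : ℝ) (M : ℕ) (Cj : ℕ → ℝ), 0 < C ∧ (∀ j, 0 ≤ Cj j) ∧
      ∀ hh : ℝ, hh ∈ Set.Ioc (0 : ℝ) 1 →
        ∃ (Ω : Set (EuclideanSpace ℝ (Fin d)))
          (φ : EuclideanSpace ℝ (Fin d) → EuclideanSpace ℝ (Fin d) → ℝ),
          Ω.Countable ∧
          (∀ ξ : EuclideanSpace ℝ (Fin d), ∃ ω ∈ Ω, ξ ∈ Uball d hh δ ω) ∧
          (∀ X : ℝ, 1 ≤ X →
            {ω ∈ Ω | ‖ω‖ ≤ X}.Finite ∧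
            ({ω ∈ Ω | ‖ω‖ ≤ X}.ncard : ℝ) ≤ C * hh ^ (-(M : ℤ)) * X ^ M) ∧
          (∀ ω₁ ∈ Ω,
            {ω₂ ∈ Ω | (Uball d hh δ ω₁ ∩ Uball d hh δ ω₂).Nonempty}.Finite ∧
            ({ω₂ ∈ Ω | (Uball d hh δ ω₁ ∩ Uball d hh δ ω₂).Nonempty}.ncard : ℝ) ≤ C) ∧
          (∀ ω ∈ Ω,
            ContDiff ℝ (⊤ : ℕ∞) (φ ω) ∧
            (∀ ξ, φ ω ξ ∈ Set.Icc (0 : ℝ) 1) ∧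
            (∀ ξ : EuclideanSpace ℝ (Fin d), 2⁻¹ < ‖ξ‖ → φ ω ξ = 0) ∧
            (∀ (j : ℕ) (ξ : EuclideanSpace ℝ (Fin d)),
              ‖iteratedFDeriv ℝ j (φ ω) ξ‖ ≤ Cj j)) ∧
          (∀ ξ : EuclideanSpace ℝ (Fin d),
            HasSum
              (fun ω : Ω =>
                φ ω.1 ((hh ^ δ * Real.sqrt (1 + ‖ω.1‖ ^ 2))⁻¹ • (ξ - ω.1)))
              1) := by
  classical
  obtain ⟨hδ0, hδ1⟩ := hδ
  obtain ⟨B, hB0, hBmaster⟩ := phifun_master d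
  refine ⟨98 ^ d, d, B, by positivity, hB0, ?_⟩
  intro h hh
  obtain ⟨h0, h1⟩ := hh
  set t := h ^ δ with htdef
  have ht0 : 0 < t := Real.rpow_pos_of_pos h0 δ
  have ht1 : t ≤ 1 := Real.rpow_le_one h0.le h1 hδ0.le
  obtain ⟨Ω, hcountable, hcover, hcount, hover⟩ := core d hd ⟨hδ0, hδ1⟩ ⟨h0, h1⟩
  -- finite neighbor sets
  have hNfin : ∀ ω, ω ∈ Ω → {ω₂ ∈ Ω | (Uball d h δ ω ∩ Uball d h δ ω₂).Nonempty}.Finite :=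
    fun ω hω => (hover ω hω).1
  let Nf : EuclideanSpace ℝ (Fin d) → Finset (EuclideanSpace ℝ (Fin d)) :=
    fun ω => if hω : ω ∈ Ω then (hNfin ω hω).toFinset else ∅
  have hmemN : ∀ ω, ω ∈ Ω → ∀ ω', (ω' ∈ Nf ω ↔
      (ω' ∈ Ω ∧ (Uball d h δ ω ∩ Uball d h δ ω').Nonempty)) := by
    intro ω hω ω'
    simp only [Nf, dif_pos hω, Set.Finite.mem_toFinset, Set.mem_setOf_eq]
  have hcardN : ∀ ω, ω ∈ Ω → ((Nf ω).card : ℝ) ≤ 98 ^ d := by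
    intro ω hω
    have : (Nf ω).card = {ω₂ ∈ Ω | (Uball d h δ ω ∩ Uball d h δ ω₂).Nonempty}.ncard := by
      simp only [Nf, dif_pos hω]
      exact (Set.ncard_eq_toFinset_card _ (hNfin ω hω)).symm
    rw [this]
    exact (hover ω hω).2
  have hjnN : ∀ ω, ω ∈ Ω → ∀ ω' ∈ Nf ω, jn ω ≤ 3 * jn ω' := by
    intro ω hω ω' hω'
    obtain ⟨_, hne⟩ := (hmemN ω hω ω').1 hω'
    exact (uball_inter ht0 ht1 (Set.inter_comm _ _ ▸ hne)).1
  -- the key positivity of the localized denominator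
  have hg1 : ∀ ω, ω ∈ Ω → ∀ η : EuclideanSpace ℝ (Fin d), ‖η‖ ≤ 2⁻¹ →
      1 ≤ gfun d t (Nf ω) ω η := by
    intro ω hω η hη
    have hjω := jn_pos ω
    set ξ := ω + (t * jn ω) • η with hξdef
    have hηeq : (t * jn ω)⁻¹ • (ξ - ω) = η := by
      rw [hξdef, add_sub_cancel_left, inv_smul_smul₀ (by positivity)]
    have heval := gfun_eval ht0 (Nf ω) ω ξ
    rw [hηeq] at heval
    rw [heval]
    obtain ⟨ω₀, hω₀Ω, hω₀d⟩ := hcover ξ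
    have hjω₀ := jn_pos ω₀
    have hξω : dist ξ ω ≤ 2⁻¹ * t * jn ω := by
      have : dist ξ ω = ‖(t * jn ω) • η‖ := by
        rw [hξdef, dist_eq_norm, add_sub_cancel_left]
      rw [this, norm_smul, Real.norm_eq_abs, abs_of_pos (by positivity)]
      nlinarith [mul_le_mul_of_nonneg_left hη (by positivity : (0:ℝ) ≤ t * jn ω)]
    have hω₀N : ω₀ ∈ Nf ω := by
      refine (hmemN ω hω ω₀).2 ⟨hω₀Ω, ⟨ξ, mem_uball_iff.2 hξω, mem_uball_iff.2 ?_⟩⟩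
      calc dist ξ ω₀ ≤ 4⁻¹ * t * jn ω₀ := hω₀d
        _ ≤ 2⁻¹ * t * jn ω₀ := by nlinarith
    have hterm : psi d ((t * jn ω₀)⁻¹ • (ξ - ω₀)) = 1 := by
      apply psi_one
      rw [norm_smul, Real.norm_eq_abs, abs_of_pos (by positivity : (0:ℝ) < (t * jn ω₀)⁻¹),
        ← dist_eq_norm]
      rw [inv_mul_le_iff₀ (by positivity)]
      nlinarith
    calc (1:ℝ) = psi d ((t * jn ω₀)⁻¹ • (ξ - ω₀)) := hterm.symm
      _ ≤ ∑ ω' ∈ Nf ω, psi d ((t * jn ω')⁻¹ • (ξ - ω')) :=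
        Finset.single_le_sum (f := fun ω' => psi d ((t * jn ω')⁻¹ • (ξ - ω')))
          (fun i _ => psi_nonneg d _) hω₀N
  -- the functions φ
  refine ⟨Ω, fun ω η => phifun d t (Nf ω) ω η, hcountable, ?_, hcount, hover, ?_, ?_⟩
  · -- covering
    intro ξ
    obtain ⟨ω₀, hω₀Ω, hω₀d⟩ := hcover ξ
    have hjω₀ := jn_pos ω₀
    refine ⟨ω₀, hω₀Ω, mem_uball_iff.2 ?_⟩
    calc dist ξ ω₀ ≤ 4⁻¹ * t * jn ω₀ := hω₀d
      _ ≤ 2⁻¹ * t * jn ω₀ := by nlinarith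
  · -- properties of each φ_ω
    intro ω hω
    refine ⟨phifun_contDiff d t (Nf ω) ω, ?_, ?_, ?_⟩
    · intro ξ
      by_cases hψ : psi d ξ = 0
      · simp only [phifun, hψ, zero_mul]
        exact ⟨le_refl 0, zero_le_one⟩
      · have hξn : ‖ξ‖ < 3⁻¹ := by
          by_contra hcon
          push_neg at hcon
          exact hψ (psi_zero d hcon)
        have hgξ : 1 ≤ gfun d t (Nf ω) ω ξ := hg1 ω hω ξ (by linarith)
        simp only [phifun]
        rw [rf_eq_inv (by linarith)]
        have hψ0 := psi_nonneg d ξ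
        have hψ1 := psi_le_one d ξ
        have hinv0 : 0 < (gfun d t (Nf ω) ω ξ)⁻¹ := by positivity
        have hinv1 : (gfun d t (Nf ω) ω ξ)⁻¹ ≤ 1 := inv_le_one_of_one_le₀ hgξ
        constructor
        · positivity
        · nlinarith
    · intro ξ hξ
      simp only [phifun]
      rw [psi_zero d (by linarith : 3⁻¹ ≤ ‖ξ‖), zero_mul]
    · intro j ξ
      exact hBmaster j t (Nf ω) ω (hjnN ω hω) (hcardN ω hω) (hg1 ω hω) ξ
  · -- the partition of unity sums to 1
    intro ξ
    obtain ⟨ω₀, hω₀Ω, hω₀d⟩ := hcover ξ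
    have hjω₀ := jn_pos ω₀
    set F : Set (EuclideanSpace ℝ (Fin d)) := {ω' ∈ Ω | dist ξ ω' ≤ 2⁻¹ * t * jn ω'}
      with hFdef
    have hω₀F : ω₀ ∈ F := ⟨hω₀Ω, by nlinarith⟩
    have hFsub : F ⊆ {ω₂ ∈ Ω | (Uball d h δ ω₀ ∩ Uball d h δ ω₂).Nonempty} := by
      intro ω' hω'
      exact ⟨hω'.1, ⟨ξ, mem_uball_iff.2 (by nlinarith [hω'.2]), mem_uball_iff.2 hω'.2⟩⟩
    have hFfin : F.Finite := ((hover ω₀ hω₀Ω).1).subset hFsub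
    set FS : Finset (EuclideanSpace ℝ (Fin d)) := hFfin.toFinset with hFSdef
    have hFSmem : ∀ ω', ω' ∈ FS ↔ (ω' ∈ Ω ∧ dist ξ ω' ≤ 2⁻¹ * t * jn ω') := by
      intro ω'
      simp only [hFSdef, Set.Finite.mem_toFinset, hFdef, Set.mem_setOf_eq]
    set S : ℝ := ∑ ω' ∈ FS, psi d ((t * jn ω')⁻¹ • (ξ - ω')) with hSdef
    have hS1 : 1 ≤ S := by
      have hterm : psi d ((t * jn ω₀)⁻¹ • (ξ - ω₀)) = 1 := by
        apply psi_one
        rw [norm_smul, Real.norm_eq_abs, abs_of_pos (by positivity : (0:ℝ) < (t * jn ω₀)⁻¹),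
          ← dist_eq_norm]
        rw [inv_mul_le_iff₀ (by positivity)]
        nlinarith
      calc (1:ℝ) = psi d ((t * jn ω₀)⁻¹ • (ξ - ω₀)) := hterm.symm
        _ ≤ S := by
            rw [hSdef]
            exact Finset.single_le_sum (f := fun ω' => psi d ((t * jn ω')⁻¹ • (ξ - ω')))
              (fun i _ => psi_nonneg d _) ((hFSmem ω₀).2 ⟨hω₀Ω, by nlinarith⟩)
    have hS0 : S ≠ 0 := by linarith
    -- values of G on Ω
    set G : EuclideanSpace ℝ (Fin d) → ℝ :=
      fun ω => phifun d t (Nf ω) ω ((t * jn ω)⁻¹ • (ξ - ω)) with hGdef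
    have hψzero : ∀ ω' ∈ Ω, ω' ∉ F → psi d ((t * jn ω')⁻¹ • (ξ - ω')) = 0 := by
      intro ω' hω'Ω hω'F
      have hjω' := jn_pos ω'
      have hd' : ¬ dist ξ ω' ≤ 2⁻¹ * t * jn ω' := fun hcon => hω'F ⟨hω'Ω, hcon⟩
      push_neg at hd'
      apply psi_zero
      rw [norm_smul, Real.norm_eq_abs, abs_of_pos (by positivity : (0:ℝ) < (t * jn ω')⁻¹),
        ← dist_eq_norm]
      rw [le_inv_mul_iff₀ (by positivity)]
      nlinarith
    have hGF : ∀ ω ∈ F, G ω = psi d ((t * jn ω)⁻¹ • (ξ - ω)) * S⁻¹ := by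
      intro ω hωF
      have hωΩ : ω ∈ Ω := hωF.1
      have hgeval : gfun d t (Nf ω) ω ((t * jn ω)⁻¹ • (ξ - ω)) = S := by
        rw [gfun_eval ht0, hSdef]
        symm
        apply Finset.sum_subset
        · intro ω'' hω''
          obtain ⟨hω''Ω, hω''d⟩ := (hFSmem ω'').1 hω''
          exact (hmemN ω hωΩ ω'').2 ⟨hω''Ω,
            ⟨ξ, mem_uball_iff.2 hωF.2, mem_uball_iff.2 hω''d⟩⟩
        · intro ω'' hω''N hω''FS
          obtain ⟨hω''Ω, _⟩ := (hmemN ω hωΩ ω'').1 hω''N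
          apply hψzero ω'' hω''Ω
          intro hcon
          exact hω''FS ((hFSmem ω'').2 ⟨hcon.1, hcon.2⟩)
      rw [hGdef]
      simp only [phifun]
      rw [hgeval, rf_eq_inv (by linarith)]
    have hGzero : ∀ ω ∈ Ω, ω ∉ F → G ω = 0 := by
      intro ω hωΩ hωF
      rw [hGdef]
      simp only [phifun]
      rw [hψzero ω hωΩ hωF, zero_mul]
    -- conclude by summing over FS
    have hind : HasSum (Ω.indicator G) 1 := by
      have hne : ∀ b, b ∉ FS → Ω.indicator G b = 0 := by
        intro b hb
        by_cases hbΩ : b ∈ Ω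
        · rw [Set.indicator_of_mem hbΩ]
          apply hGzero b hbΩ
          intro hbF
          exact hb (hFSdef ▸ hFfin.mem_toFinset.2 hbF)
        · exact Set.indicator_of_notMem hbΩ _
      have hsum := hasSum_sum_of_ne_finset_zero (s := FS) (L := SummationFilter.unconditional _) hne
      have hone : ∑ b ∈ FS, Ω.indicator G b = 1 := by
        have hFmem : ∀ b ∈ FS, b ∈ F := fun b hb => hFfin.mem_toFinset.1 (hFSdef ▸ hb)
        calc ∑ b ∈ FS, Ω.indicator G b = ∑ b ∈ FS, psi d ((t * jn b)⁻¹ • (ξ - b)) * S⁻¹ := by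
              apply Finset.sum_congr rfl
              intro b hb
              rw [Set.indicator_of_mem (hFmem b hb).1, hGF b (hFmem b hb)]
          _ = S * S⁻¹ := by rw [← Finset.sum_mul, ← hSdef]
          _ = 1 := mul_inv_cancel₀ hS0
      rwa [hone] at hsum
    have := (hasSum_subtype_iff_indicator (s := Ω) (f := G) (a := (1:ℝ))).2 hind
    exact this
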